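/- For every sequence 𝐢 = ⟨i₁,…,i_ℓ⟩ ∈ Seq₂(m,n) (with ℓ = m+n) and every u ∈ ℂ, one has ∏_{j=1}^{ℓ} P_{i_j}(u+σ_j+α_{i_j}/2) = ∏_{λ∈F} (u−λ)^{2·ord(𝐢,λ)}, where the product on the right has only finitely many factors different from 1 since ord(𝐢,·) is nonzero at only finitely many λ ∈ F. -/
import Mathlib


open Complex

noncomputable section
open scoped Classical

/-- The face lattice `F = ℤα + ℤβ ⊆ ℝ`. -/
def latF (α β : ℝ) : Set ℝ := {u | ∃ x y : ℤ, u = x * α + y * β}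

/-- The vertex lattice `V = F + (α+β)/2`. -/
def latV (α β : ℝ) : Set ℝ := {u | ∃ x y : ℤ, u = x * α + y * β + (α + β) / 2}

/-- The vertical edge lattice `E₁ = F + α/2`. -/
def latE1 (α β : ℝ) : Set ℝ := {u | ∃ x y : ℤ, u = x * α + y * β + α / 2}

/-- The horizontal edge lattice `E₂ = F + β/2`. -/
def latE2 (α β : ℝ) : Set ℝ := {u | ∃ x y : ℤ, u = x * α + y * β + β / 2}

/-- An `(m,n)`-periodic higher spin vertex configuration: a pair of finitely supported
multiplicity functions, supported on `E₁` resp. `E₂`, satisfying the current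
conservation rule. -/
structure Config (α β : ℝ) (ℒ₁ ℒ₂ : ℝ → ℕ) : Prop where
  supp1 : ∀ u : ℝ, ℒ₁ u ≠ 0 → u ∈ latE1 α β
  supp2 : ∀ u : ℝ, ℒ₂ u ≠ 0 → u ∈ latE2 α β
  fin1 : (Function.support ℒ₁).Finite
  fin2 : (Function.support ℒ₂).Finite
  conserv : ∀ v ∈ latV α β,
    ℒ₁ (v + β / 2) + ℒ₂ (v + α / 2) = ℒ₁ (v - β / 2) + ℒ₂ (v - α / 2)

/-- `Pᵢ(u) = ∏_{e} (u-e)^{ℒᵢ(e)}` as a function on `ℂ` (a finite product). -/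
def PfunC (ℒ : ℝ → ℕ) (u : ℂ) : ℂ := ∏ᶠ e : ℝ, (u - (e : ℂ)) ^ ℒ e

/-- `Pᵢ(u) = ∏_{e} (u-e)^{ℒᵢ(e)}` as a real-valued function on `ℝ`. -/
def PfunR (ℒ : ℝ → ℕ) (u : ℝ) : ℝ := ∏ᶠ e : ℝ, (u - e) ^ ℒ e

/-- The step `α₁ = α` (for `i = 0`, i.e. a `1`-step) or `α₂ = β` (for `i = 1`). -/
def stepOf (α β : ℝ) (i : Fin 2) : ℝ := if i = 0 then α else β

/-- `σ_j = α_{i₁} + ⋯ + α_{i_{j-1}}`, the partial sum of the first `j` steps. -/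
def sigmaL (α β : ℝ) (l : List (Fin 2)) (j : ℕ) : ℝ :=
  ((l.take j).map (stepOf α β)).sum

/-- `ord(𝐢,λ) = Σ_{j : i_j = 1} 𝓛₁(λ + σ_j + α/2)`. -/
def ordL (α β : ℝ) (ℒ₁ : ℝ → ℕ) (l : List (Fin 2)) (lam : ℝ) : ℕ :=
  ∑ j ∈ Finset.range l.length,
    if l.getD j 0 = 0 then ℒ₁ (lam + sigmaL α β l j + α / 2) else 0

/-! ### Auxiliary lemmas -/

section Aux

lemma latF_add {α β a b : ℝ} (ha : a ∈ latF α β) (hb : b ∈ latF α β) :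
    a + b ∈ latF α β := by
  obtain ⟨x1, y1, rfl⟩ := ha; obtain ⟨x2, y2, rfl⟩ := hb
  exact ⟨x1 + x2, y1 + y2, by push_cast; ring⟩

lemma latF_sub_right {α β a b : ℝ} (ha : a + b ∈ latF α β) (hb : b ∈ latF α β) :
    a ∈ latF α β := by
  obtain ⟨x1, y1, h1⟩ := ha; obtain ⟨x2, y2, rfl⟩ := hb
  exact ⟨x1 - x2, y1 - y2, by push_cast; linarith⟩

lemma latF_alpha (α β : ℝ) : α ∈ latF α β := ⟨1, 0, by push_cast; ring⟩
lemma latF_beta (α β : ℝ) : β ∈ latF α β := ⟨0, 1, by push_cast; ring⟩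
lemma latF_zero (α β : ℝ) : (0 : ℝ) ∈ latF α β := ⟨0, 0, by push_cast; ring⟩

lemma mem_latF_of_latE1 {α β x : ℝ} (h : x + α / 2 ∈ latE1 α β) : x ∈ latF α β := by
  obtain ⟨a, b, hab⟩ := h; exact ⟨a, b, by linarith⟩

lemma mem_latF_of_latE2 {α β x : ℝ} (h : x + β / 2 ∈ latE2 α β) : x ∈ latF α β := by
  obtain ⟨a, b, hab⟩ := h; exact ⟨a, b, by linarith⟩

lemma sigmaL_mem (α β : ℝ) (l : List (Fin 2)) (j : ℕ) :
    sigmaL α β l j ∈ latF α β := by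
  have h : ∀ L : List (Fin 2), (L.map (stepOf α β)).sum ∈ latF α β := by
    intro L
    induction L with
    | nil => simpa using latF_zero α β
    | cons i t ih =>
      simp only [List.map_cons, List.sum_cons]
      refine latF_add ?_ ih
      rcases Fin.exists_fin_two.mp ⟨i, rfl⟩ with h | h
      · subst h; simpa [stepOf] using latF_alpha α β
      · subst h; simpa [stepOf] using latF_beta α β
  exact h _

/-- The conservation law in translated form, valid for **all** real `x`
(off the lattice all four terms vanish). -/
lemma star_all {α β : ℝ} {ℒ₁ ℒ₂ : ℝ → ℕ} (hconf : Config α β ℒ₁ ℒ₂) (x : ℝ) :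
    ℒ₁ (x + β + α / 2) + ℒ₂ (x + α + β / 2) = ℒ₁ (x + α / 2) + ℒ₂ (x + β / 2) := by
  by_cases hx : x ∈ latF α β
  · obtain ⟨a, b, rfl⟩ := hx
    have hv : (a : ℝ) * α + b * β + (α + β) / 2 ∈ latV α β := ⟨a, b, rfl⟩
    have h := hconf.conserv _ hv
    rw [show (a:ℝ) * α + b * β + (α + β) / 2 + β / 2 = (a:ℝ)*α + b*β + β + α/2 by ring,
        show (a:ℝ) * α + b * β + (α + β) / 2 + α / 2 = (a:ℝ)*α + b*β + α + β/2 by ring,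
        show (a:ℝ) * α + b * β + (α + β) / 2 - β / 2 = (a:ℝ)*α + b*β + α/2 by ring,
        show (a:ℝ) * α + b * β + (α + β) / 2 - α / 2 = (a:ℝ)*α + b*β + β/2 by ring] at h
    exact h
  · have h1 : ℒ₁ (x + β + α / 2) = 0 := by
      by_contra h
      have := mem_latF_of_latE1 (x := x + β)
        (by rw [show x + β + α/2 = (x+β) + α/2 by ring] at *; exact hconf.supp1 _ h)
      exact hx (latF_sub_right this (latF_beta α β))
    have h2 : ℒ₂ (x + α + β / 2) = 0 := by
      by_contra h
      have := mem_latF_of_latE2 (x := x + α)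
        (by rw [show x + α + β/2 = (x+α) + β/2 by ring] at *; exact hconf.supp2 _ h)
      exact hx (latF_sub_right this (latF_alpha α β))
    have h3 : ℒ₁ (x + α / 2) = 0 := by
      by_contra h; exact hx (mem_latF_of_latE1 (hconf.supp1 _ h))
    have h4 : ℒ₂ (x + β / 2) = 0 := by
      by_contra h; exact hx (mem_latF_of_latE2 (hconf.supp2 _ h))
    rw [h1, h2, h3, h4]

/-- The canonical-order difference function
`Φ(λ) = Σ_{j<m} f(λ+jα) − Σ_{k<n} g(λ+mα+kβ)`. -/
def PhiF (α β : ℝ) (f g : ℝ → ℕ) (m n : ℕ) (lam : ℝ) : ℤ :=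
  (∑ j ∈ Finset.range m, (f (lam + j * α) : ℤ)) -
  ∑ k ∈ Finset.range n, (g (lam + m * α + k * β) : ℤ)

section Phi
variable {α β : ℝ} {f g : ℝ → ℕ} {m n : ℕ}
  (hstar : ∀ x : ℝ, f (x + β) + g (x + α) = f x + g x)

include hstar in
lemma tele1 (m : ℕ) (lam : ℝ) :
    (∑ j ∈ Finset.range m, (f (lam + β + j * α) : ℤ)) -
      ∑ j ∈ Finset.range m, (f (lam + j * α) : ℤ) =
    (g lam : ℤ) - g (lam + m * α) := by
  rw [← Finset.sum_sub_distrib]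
  have hterm : ∀ j ∈ Finset.range m,
      (f (lam + β + j * α) : ℤ) - f (lam + j * α) =
      (fun t : ℕ => (g (lam + t * α) : ℤ)) j - (fun t : ℕ => (g (lam + t * α) : ℤ)) (j + 1) := by
    intro j _
    have h := hstar (lam + (j : ℝ) * α)
    rw [show lam + (j : ℝ) * α + β = lam + β + j * α by ring,
        show lam + (j : ℝ) * α + α = lam + ((j + 1 : ℕ) : ℝ) * α by push_cast; ring] at h
    simp only
    omega
  rw [Finset.sum_congr rfl hterm, Finset.sum_range_sub' (fun t : ℕ => (g (lam + t * α) : ℤ)) m]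
  norm_num

include hstar in
lemma tele2 (m : ℕ) (lam : ℝ) :
    (∑ j ∈ Finset.range m, (g (lam + α + j * β) : ℤ)) -
      ∑ j ∈ Finset.range m, (g (lam + j * β) : ℤ) =
    (f lam : ℤ) - f (lam + m * β) := by
  rw [← Finset.sum_sub_distrib]
  have hterm : ∀ j ∈ Finset.range m,
      (g (lam + α + j * β) : ℤ) - g (lam + j * β) =
      (fun t : ℕ => (f (lam + t * β) : ℤ)) j - (fun t : ℕ => (f (lam + t * β) : ℤ)) (j + 1) := by
    intro j _
    have h := hstar (lam + (j : ℝ) * β)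
    rw [show lam + (j : ℝ) * β + β = lam + ((j + 1 : ℕ) : ℝ) * β by push_cast; ring,
        show lam + (j : ℝ) * β + α = lam + α + j * β by ring] at h
    simp only
    omega
  rw [Finset.sum_congr rfl hterm, Finset.sum_range_sub' (fun t : ℕ => (f (lam + t * β) : ℤ)) m]
  norm_num

include hstar in
lemma PhiF_add_beta (hlin : (m : ℝ) * α + (n : ℝ) * β = 0) (lam : ℝ) :
    PhiF α β f g m n (lam + β) = PhiF α β f g m n lam := by
  have key1 := tele1 hstar m lam
  have key2 : (∑ k ∈ Finset.range n, (g (lam + β + m * α + k * β) : ℤ)) -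
      ∑ k ∈ Finset.range n, (g (lam + m * α + k * β) : ℤ) =
      (g lam : ℤ) - g (lam + m * α) := by
    rw [← Finset.sum_sub_distrib]
    have hterm : ∀ k ∈ Finset.range n,
        (g (lam + β + m * α + k * β) : ℤ) - g (lam + m * α + k * β) =
        (fun t : ℕ => (g (lam + m * α + t * β) : ℤ)) (k + 1) -
          (fun t : ℕ => (g (lam + m * α + t * β) : ℤ)) k := by
      intro k _
      simp only
      rw [show lam + m * α + ((k + 1 : ℕ) : ℝ) * β = lam + β + m * α + k * β by push_cast; ring]
    rw [Finset.sum_congr rfl hterm, Finset.sum_range_sub (fun t : ℕ => (g (lam + m * α + t * β) : ℤ)) n]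
    rw [show lam + (m : ℝ) * α + (n : ℕ) * β = lam by rw [add_assoc]; rw [hlin]; ring]
    norm_num
  simp only [PhiF]
  linarith [key1, key2]

include hstar in
lemma PhiF_add_alpha (hlin : (m : ℝ) * α + (n : ℝ) * β = 0) (lam : ℝ) :
    PhiF α β f g m n (lam + α) = PhiF α β f g m n lam := by
  have key1 : (∑ j ∈ Finset.range m, (f (lam + α + j * α) : ℤ)) -
      ∑ j ∈ Finset.range m, (f (lam + j * α) : ℤ) =
      (f (lam + m * α) : ℤ) - f lam := by
    rw [← Finset.sum_sub_distrib]
    have hterm : ∀ j ∈ Finset.range m,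
        (f (lam + α + j * α) : ℤ) - f (lam + j * α) =
        (fun t : ℕ => (f (lam + t * α) : ℤ)) (j + 1) -
          (fun t : ℕ => (f (lam + t * α) : ℤ)) j := by
      intro j _
      simp only
      rw [show lam + ((j + 1 : ℕ) : ℝ) * α = lam + α + j * α by push_cast; ring]
    rw [Finset.sum_congr rfl hterm, Finset.sum_range_sub (fun t : ℕ => (f (lam + t * α) : ℤ)) m]
    norm_num
  have key2 := tele2 hstar n (lam + (m : ℝ) * α)
  rw [show lam + (m : ℝ) * α + (n : ℕ) * β = lam by rw [add_assoc]; rw [hlin]; ring] at key2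
  simp only [PhiF]
  simp only [show ∀ k : ℕ, lam + α + (m : ℝ) * α + (k : ℝ) * β = lam + (m:ℝ) * α + α + (k:ℝ) * β
    from fun k => by ring]
  linarith [key1, key2]

end Phi

lemma abs_ge_sub {a b : ℝ} : |a| - |b| ≤ |a + b| := by
  have t := abs_add_le (a + b) (-b)
  rw [abs_neg, show a + b + -b = a by ring] at t
  linarith

lemma PhiF_eq_zero {α β : ℝ} {f g : ℝ → ℕ} {m n : ℕ}
    (hstar : ∀ x : ℝ, f (x + β) + g (x + α) = f x + g x)
    (hlin : (m : ℝ) * α + (n : ℝ) * β = 0)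
    (hαβ : ¬(α = 0 ∧ β = 0))
    (hf : (Function.support f).Finite) (hg : (Function.support g).Finite)
    (lam : ℝ) : PhiF α β f g m n lam = 0 := by
  obtain ⟨δ, hδ0, hδstep⟩ : ∃ δ : ℝ, δ ≠ 0 ∧
      ∀ x : ℝ, PhiF α β f g m n (x + δ) = PhiF α β f g m n x := by
    by_cases hα : α = 0
    · refine ⟨β, fun hβ => hαβ ⟨hα, hβ⟩, fun x => PhiF_add_beta hstar hlin x⟩
    · exact ⟨α, hα, fun x => PhiF_add_alpha hstar hlin x⟩
  have hiter : ∀ N : ℕ, PhiF α β f g m n (lam + N * δ) = PhiF α β f g m n lam := by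
    intro N
    induction N with
    | zero => norm_num
    | succ N ih =>
      rw [show lam + ((N + 1 : ℕ) : ℝ) * δ = (lam + (N : ℕ) * δ) + δ by push_cast; ring,
        hδstep, ih]
  obtain ⟨C, hC⟩ := ((hf.union hg).image (fun x : ℝ => |x|)).bddAbove
  have hCf : ∀ x : ℝ, f x ≠ 0 → |x| ≤ C := fun x hx => hC ⟨x, Or.inl hx, rfl⟩
  have hCg : ∀ x : ℝ, g x ≠ 0 → |x| ≤ C := fun x hx => hC ⟨x, Or.inr hx, rfl⟩
  have hδpos : (0:ℝ) < |δ| := abs_pos.mpr hδ0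
  obtain ⟨N, hN⟩ := exists_nat_gt ((|lam| + C + m * |α| + n * |β|) / |δ|)
  have hNδ : |lam| + C + (m:ℝ) * |α| + (n:ℝ) * |β| < N * |δ| := by
    rw [div_lt_iff₀ hδpos] at hN; linarith
  have key : PhiF α β f g m n (lam + N * δ) = 0 := by
    have hbig : ∀ a : ℝ, |a| ≤ (m:ℝ) * |α| + (n:ℝ) * |β| →
        C < |lam + (N:ℝ) * δ + a| := by
      intro a ha
      have h1 : |(N:ℝ) * δ| - |lam + a| ≤ |(N:ℝ) * δ + (lam + a)| := abs_ge_sub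
      have h2 : |lam + a| ≤ |lam| + |a| := abs_add_le _ _
      have h3 : |(N:ℝ) * δ| = (N:ℝ) * |δ| := by
        rw [abs_mul, Nat.abs_cast]
      have h4 : (N:ℝ) * δ + (lam + a) = lam + (N:ℝ) * δ + a := by ring
      rw [h4] at h1
      linarith
    have hz1 : ∀ j ∈ Finset.range m, (f ((lam + (N:ℝ) * δ) + j * α) : ℤ) = 0 := by
      intro j hj
      have hjm : (j : ℝ) ≤ m := by
        exact_mod_cast (Finset.mem_range.mp hj).le
      have habs : |(j:ℝ) * α| ≤ (m:ℝ) * |α| + (n:ℝ) * |β| := by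
        rw [abs_mul, Nat.abs_cast]
        nlinarith [abs_nonneg α, abs_nonneg β, Nat.cast_nonneg (α := ℝ) n]
      have hzero : f ((lam + (N:ℝ) * δ) + j * α) = 0 := by
        by_contra h
        have := hCf _ h
        rw [show (lam + (N:ℝ) * δ) + (j:ℝ) * α = lam + (N:ℝ)*δ + (j:ℝ)*α by ring] at this
        linarith [hbig ((j:ℝ) * α) habs]
      exact_mod_cast hzero
    have hz2 : ∀ k ∈ Finset.range n, (g ((lam + (N:ℝ) * δ) + m * α + k * β) : ℤ) = 0 := by
      intro k hk
      have hkn : (k : ℝ) ≤ n := by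
        exact_mod_cast (Finset.mem_range.mp hk).le
      have habs : |(m:ℝ) * α + (k:ℝ) * β| ≤ (m:ℝ) * |α| + (n:ℝ) * |β| := by
        have := abs_add_le ((m:ℝ) * α) ((k:ℝ) * β)
        rw [abs_mul, abs_mul, Nat.abs_cast, Nat.abs_cast] at this
        nlinarith [abs_nonneg β, Nat.cast_nonneg (α := ℝ) m]
      have hzero : g ((lam + (N:ℝ) * δ) + m * α + k * β) = 0 := by
        by_contra h
        have hle := hCg _ h
        rw [show (lam + (N:ℝ) * δ) + (m:ℝ) * α + (k:ℝ) * β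
            = lam + (N:ℝ)*δ + ((m:ℝ)*α + (k:ℝ)*β) by ring] at hle
        linarith [hbig ((m:ℝ) * α + (k:ℝ) * β) habs]
      exact_mod_cast hzero
    simp only [PhiF]
    rw [Finset.sum_eq_zero hz1, Finset.sum_eq_zero hz2]
    ring
  rw [← hiter N, key]

lemma sigmaL_zero (α β : ℝ) (l : List (Fin 2)) : sigmaL α β l 0 = 0 := by simp [sigmaL]

lemma sigmaL_cons_succ (α β : ℝ) (i : Fin 2) (t : List (Fin 2)) (j : ℕ) :
    sigmaL α β (i :: t) (j + 1) = stepOf α β i + sigmaL α β t j := by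
  simp [sigmaL, List.take_succ_cons]

/-- The sum of `f` over the `1`-steps of the path. -/
def AS (α β : ℝ) (f : ℝ → ℕ) (l : List (Fin 2)) (lam : ℝ) : ℕ :=
  ∑ j ∈ Finset.range l.length, if l.getD j 0 = 0 then f (lam + sigmaL α β l j) else 0

/-- The sum of `g` over the `2`-steps of the path. -/
def BS (α β : ℝ) (g : ℝ → ℕ) (l : List (Fin 2)) (lam : ℝ) : ℕ :=
  ∑ j ∈ Finset.range l.length, if l.getD j 0 = 0 then 0 else g (lam + sigmaL α β l j)

lemma AS_cons (α β : ℝ) (f : ℝ → ℕ) (i : Fin 2) (t : List (Fin 2)) (lam : ℝ) :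
    AS α β f (i :: t) lam = (if i = 0 then f lam else 0) + AS α β f t (lam + stepOf α β i) := by
  simp only [AS, List.length_cons, Finset.sum_range_succ', List.getD_cons_succ,
    List.getD_cons_zero, sigmaL_cons_succ, sigmaL_zero, add_zero, ← add_assoc]
  exact add_comm _ _

lemma BS_cons (α β : ℝ) (g : ℝ → ℕ) (i : Fin 2) (t : List (Fin 2)) (lam : ℝ) :
    BS α β g (i :: t) lam = (if i = 0 then 0 else g lam) + BS α β g t (lam + stepOf α β i) := by
  simp only [BS, List.length_cons, Finset.sum_range_succ', List.getD_cons_succ,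
    List.getD_cons_zero, sigmaL_cons_succ, sigmaL_zero, add_zero, ← add_assoc]
  exact add_comm _ _

lemma PhiF_succ_left (α β : ℝ) (f g : ℝ → ℕ) (c0 c1 : ℕ) (lam : ℝ) :
    PhiF α β f g (c0 + 1) c1 lam = (f lam : ℤ) + PhiF α β f g c0 c1 (lam + α) := by
  simp only [PhiF]
  rw [Finset.sum_range_succ']
  rw [Finset.sum_congr rfl (fun j (_ : j ∈ Finset.range c0) => by
    rw [show lam + ((j + 1 : ℕ) : ℝ) * α = (lam + α) + (j : ℝ) * α by push_cast; ring])]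
  rw [Finset.sum_congr rfl (fun k (_ : k ∈ Finset.range c1) => by
    rw [show lam + ((c0 + 1 : ℕ) : ℝ) * α + (k : ℝ) * β
        = (lam + α) + (c0 : ℝ) * α + (k : ℝ) * β by push_cast; ring])]
  simp only [Nat.cast_zero, zero_mul, add_zero]
  push_cast
  linarith

lemma PhiF_succ_right {α β : ℝ} {f g : ℝ → ℕ}
    (hstar : ∀ x : ℝ, f (x + β) + g (x + α) = f x + g x) (c0 c1 : ℕ) (lam : ℝ) :
    PhiF α β f g c0 (c1 + 1) lam = PhiF α β f g c0 c1 (lam + β) - (g lam : ℤ) := by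
  have ht := tele1 hstar c0 lam
  simp only [PhiF]
  rw [Finset.sum_range_succ' (fun k : ℕ => (g (lam + (c0:ℝ) * α + (k:ℝ) * β) : ℤ)) c1]
  rw [Finset.sum_congr rfl (fun k (_ : k ∈ Finset.range c1) => by
    show (g (lam + (c0:ℝ) * α + ((k + 1 : ℕ) : ℝ) * β) : ℤ)
        = (g ((lam + β) + (c0:ℝ) * α + (k:ℝ) * β) : ℤ)
    rw [show lam + (c0 : ℝ) * α + ((k + 1 : ℕ) : ℝ) * β
        = (lam + β) + (c0 : ℝ) * α + (k : ℝ) * β by push_cast; ring])]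
  simp only [Nat.cast_zero, zero_mul, add_zero]
  linarith [ht]

lemma key_counts {α β : ℝ} {f g : ℝ → ℕ}
    (hstar : ∀ x : ℝ, f (x + β) + g (x + α) = f x + g x) :
    ∀ (l : List (Fin 2)) (lam : ℝ),
      (AS α β f l lam : ℤ) - (BS α β g l lam : ℤ)
        = PhiF α β f g (l.count 0) (l.count 1) lam := by
  intro l
  induction l with
  | nil => intro lam; simp [AS, BS, PhiF]
  | cons i t ih =>
    intro lam
    rw [AS_cons, BS_cons]
    rcases Fin.exists_fin_two.mp ⟨i, rfl⟩ with h | h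
    · subst h
      simp only [if_pos rfl, stepOf, List.count_cons]
      norm_num
      rw [PhiF_succ_left]
      have := ih (lam + α)
      linarith
    · subst h
      have h10 : (1 : Fin 2) ≠ 0 := by decide
      simp only [if_neg h10, stepOf, List.count_cons]
      norm_num
      rw [PhiF_succ_right hstar]
      have := ih (lam + β)
      linarith

lemma PfunC_shift (ℒ : ℝ → ℕ) (u : ℂ) (c : ℝ) :
    PfunC ℒ (u + (c : ℂ)) = ∏ᶠ lam : ℝ, (u - (lam : ℂ)) ^ ℒ (lam + c) := by
  rw [PfunC, ← finprod_comp_equiv (Equiv.addRight c)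
    (f := fun e : ℝ => (u + (c : ℂ) - (e : ℂ)) ^ ℒ e)]
  apply finprod_congr
  intro lam
  have h : (Equiv.addRight c) lam = lam + c := rfl
  rw [h, show u + (c : ℂ) - ((lam + c : ℝ) : ℂ) = u - (lam : ℂ) by push_cast; ring]

end Aux

/-- For every `𝐢 ∈ Seq₂(m,n)` and `u ∈ ℂ`:
`∏_{j=1}^{ℓ} P_{i_j}(u+σ_j+α_{i_j}/2) = ∏_{λ∈F} (u−λ)^{2·ord(𝐢,λ)}`, the right-hand
product having only finitely many factors `≠ 1` since `ord(𝐢,·)` is nonzero at only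
finitely many `λ ∈ F`. -/
theorem stmt16 (m n : ℕ) (hmn : Nat.Coprime m n) (α β : ℝ)
    (hαβ : (α, β) ≠ ((0 : ℝ), (0 : ℝ))) (hlin : (m : ℝ) * α + (n : ℝ) * β = 0)
    (ℒ₁ ℒ₂ : ℝ → ℕ) (hconf : Config α β ℒ₁ ℒ₂)
    (l : List (Fin 2)) (hl0 : l.count 0 = m) (hl1 : l.count 1 = n) :
    {lam ∈ latF α β | ordL α β ℒ₁ l lam ≠ 0}.Finite ∧
    ∀ u : ℂ,
      (∏ j ∈ Finset.range l.length,
        PfunC (if l.getD j 0 = 0 then ℒ₁ else ℒ₂)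
          (u + (sigmaL α β l j : ℝ) +
            (if l.getD j 0 = 0 then (α : ℂ) else (β : ℂ)) / 2)) =
      ∏ᶠ lam ∈ latF α β, (u - (lam : ℂ)) ^ (2 * ordL α β ℒ₁ l lam) := by
  classical
  have hstar : ∀ x : ℝ,
      ℒ₁ (x + β + α / 2) + ℒ₂ (x + α + β / 2) = ℒ₁ (x + α / 2) + ℒ₂ (x + β / 2) :=
    star_all hconf
  have hαβ' : ¬(α = 0 ∧ β = 0) := by
    rintro ⟨h1, h2⟩; exact hαβ (by simp [h1, h2])
  have hfin_f : (Function.support fun x : ℝ => ℒ₁ (x + α / 2)).Finite := by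
    have hsub : (Function.support fun x : ℝ => ℒ₁ (x + α / 2)) ⊆
        (fun x : ℝ => x + α / 2) ⁻¹' Function.support ℒ₁ := fun x hx => hx
    exact ((hconf.fin1).preimage ((add_left_injective (α / 2)).injOn)).subset hsub
  have hfin_g : (Function.support fun x : ℝ => ℒ₂ (x + β / 2)).Finite := by
    have hsub : (Function.support fun x : ℝ => ℒ₂ (x + β / 2)) ⊆
        (fun x : ℝ => x + β / 2) ⁻¹' Function.support ℒ₂ := fun x hx => hx
    exact ((hconf.fin2).preimage ((add_left_injective (β / 2)).injOn)).subset hsub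
  have hASBS : ∀ lam : ℝ, AS α β (fun x => ℒ₁ (x + α / 2)) l lam
      = BS α β (fun x => ℒ₂ (x + β / 2)) l lam := by
    intro lam
    have h := key_counts (f := fun x => ℒ₁ (x + α / 2)) (g := fun x => ℒ₂ (x + β / 2))
      hstar l lam
    rw [hl0, hl1, PhiF_eq_zero (f := fun x => ℒ₁ (x + α / 2)) (g := fun x => ℒ₂ (x + β / 2))
      hstar hlin hαβ' hfin_f hfin_g lam] at h
    omega
  have hordAS : ∀ lam : ℝ, ordL α β ℒ₁ l lam = AS α β (fun x => ℒ₁ (x + α / 2)) l lam :=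
    fun lam => rfl
  set S : Finset ℝ := (Finset.range l.length).biUnion (fun j =>
    (hconf.fin1.toFinset.image (fun x => x - (sigmaL α β l j + α / 2))) ∪
    (hconf.fin2.toFinset.image (fun x => x - (sigmaL α β l j + β / 2)))) with hSdef
  have hS1 : ∀ j ∈ Finset.range l.length, ∀ lam : ℝ,
      ℒ₁ (lam + sigmaL α β l j + α / 2) ≠ 0 → lam ∈ S := by
    intro j hj lam h
    refine Finset.mem_biUnion.mpr ⟨j, hj, Finset.mem_union_left _
      (Finset.mem_image.mpr ⟨lam + sigmaL α β l j + α / 2, ?_, by ring⟩)⟩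
    exact hconf.fin1.mem_toFinset.mpr h
  have hS2 : ∀ j ∈ Finset.range l.length, ∀ lam : ℝ,
      ℒ₂ (lam + sigmaL α β l j + β / 2) ≠ 0 → lam ∈ S := by
    intro j hj lam h
    refine Finset.mem_biUnion.mpr ⟨j, hj, Finset.mem_union_right _
      (Finset.mem_image.mpr ⟨lam + sigmaL α β l j + β / 2, ?_, by ring⟩)⟩
    exact hconf.fin2.mem_toFinset.mpr h
  have hordS : ∀ lam : ℝ, ordL α β ℒ₁ l lam ≠ 0 → lam ∈ S := by
    intro lam h
    simp only [ordL] at h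
    obtain ⟨j, hj, hne⟩ := Finset.exists_ne_zero_of_sum_ne_zero h
    by_cases hc : l.getD j 0 = 0
    · rw [if_pos hc] at hne
      exact hS1 j hj lam hne
    · rw [if_neg hc] at hne; exact absurd rfl hne
  have hordF : ∀ lam : ℝ, ordL α β ℒ₁ l lam ≠ 0 → lam ∈ latF α β := by
    intro lam h
    simp only [ordL] at h
    obtain ⟨j, hj, hne⟩ := Finset.exists_ne_zero_of_sum_ne_zero h
    by_cases hc : l.getD j 0 = 0
    · rw [if_pos hc] at hne
      have h1 : lam + sigmaL α β l j + α / 2 ∈ latE1 α β := hconf.supp1 _ hne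
      have h2 : lam + sigmaL α β l j ∈ latF α β := mem_latF_of_latE1 h1
      exact latF_sub_right h2 (sigmaL_mem α β l j)
    · rw [if_neg hc] at hne; exact absurd rfl hne
  constructor
  · exact S.finite_toSet.subset (fun lam hlam => hordS lam hlam.2)
  intro u
  have hsuppRHS : Function.mulSupport
      (fun lam : ℝ => (u - (lam : ℂ)) ^ (2 * ordL α β ℒ₁ l lam)) ⊆
      {lam : ℝ | ordL α β ℒ₁ l lam ≠ 0} := by
    intro lam hlam
    by_contra h0
    simp only [Set.mem_setOf_eq, not_not] at h0
    apply hlam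
    simp [h0]
  have hRHS : (∏ᶠ lam ∈ latF α β, (u - (lam : ℂ)) ^ (2 * ordL α β ℒ₁ l lam))
      = ∏ lam ∈ S, (u - (lam : ℂ)) ^ (2 * ordL α β ℒ₁ l lam) := by
    rw [finprod_mem_def,
      Set.mulIndicator_eq_self.mpr (fun lam hlam => hordF lam (hsuppRHS hlam))]
    exact finprod_eq_prod_of_mulSupport_subset _ (fun lam hlam => hordS lam (hsuppRHS hlam))
  rw [hRHS]
  have hfac : ∀ j ∈ Finset.range l.length,
      PfunC (if l.getD j 0 = 0 then ℒ₁ else ℒ₂)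
        (u + ((sigmaL α β l j : ℝ) : ℂ) + (if l.getD j 0 = 0 then (α : ℂ) else (β : ℂ)) / 2)
      = ∏ lam ∈ S, (u - (lam : ℂ)) ^
          (if l.getD j 0 = 0 then ℒ₁ (lam + sigmaL α β l j + α / 2)
            else ℒ₂ (lam + sigmaL α β l j + β / 2)) := by
    intro j hj
    by_cases hc : l.getD j 0 = 0
    · simp only [if_pos hc]
      rw [show u + ((sigmaL α β l j : ℝ) : ℂ) + (α : ℂ) / 2
          = u + ((sigmaL α β l j + α / 2 : ℝ) : ℂ) by push_cast; ring]
      rw [PfunC_shift]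
      have hss : Function.mulSupport
          (fun lam : ℝ => (u - (lam : ℂ)) ^ ℒ₁ (lam + (sigmaL α β l j + α / 2))) ⊆ ↑S := by
        intro lam hlam
        have hne : ℒ₁ (lam + (sigmaL α β l j + α / 2)) ≠ 0 := by
          intro h0; apply hlam; simp [h0]
        rw [← add_assoc] at hne
        exact hS1 j hj lam hne
      rw [finprod_eq_prod_of_mulSupport_subset _ hss]
      exact Finset.prod_congr rfl (fun lam _ => by rw [← add_assoc])
    · simp only [if_neg hc]
      rw [show u + ((sigmaL α β l j : ℝ) : ℂ) + (β : ℂ) / 2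
          = u + ((sigmaL α β l j + β / 2 : ℝ) : ℂ) by push_cast; ring]
      rw [PfunC_shift]
      have hss : Function.mulSupport
          (fun lam : ℝ => (u - (lam : ℂ)) ^ ℒ₂ (lam + (sigmaL α β l j + β / 2))) ⊆ ↑S := by
        intro lam hlam
        have hne : ℒ₂ (lam + (sigmaL α β l j + β / 2)) ≠ 0 := by
          intro h0; apply hlam; simp [h0]
        rw [← add_assoc] at hne
        exact hS2 j hj lam hne
      rw [finprod_eq_prod_of_mulSupport_subset _ hss]
      exact Finset.prod_congr rfl (fun lam _ => by rw [← add_assoc])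
  have hsum : ∀ lam : ℝ,
      (∑ j ∈ Finset.range l.length,
        if l.getD j 0 = 0 then ℒ₁ (lam + sigmaL α β l j + α / 2)
          else ℒ₂ (lam + sigmaL α β l j + β / 2)) = 2 * ordL α β ℒ₁ l lam := by
    intro lam
    have hsplit : ∀ j ∈ Finset.range l.length,
        (if l.getD j 0 = 0 then ℒ₁ (lam + sigmaL α β l j + α / 2)
          else ℒ₂ (lam + sigmaL α β l j + β / 2))
        = (if l.getD j 0 = 0 then ℒ₁ (lam + sigmaL α β l j + α / 2) else 0)
          + (if l.getD j 0 = 0 then 0 else ℒ₂ (lam + sigmaL α β l j + β / 2)) := by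
      intro j _
      by_cases hc : l.getD j 0 = 0
      · rw [if_pos hc, if_pos hc, if_pos hc]; omega
      · rw [if_neg hc, if_neg hc, if_neg hc]; omega
    rw [Finset.sum_congr rfl hsplit, Finset.sum_add_distrib]
    have h1 : (∑ j ∈ Finset.range l.length,
        if l.getD j 0 = 0 then ℒ₁ (lam + sigmaL α β l j + α / 2) else 0)
        = ordL α β ℒ₁ l lam := rfl
    have h2 : (∑ j ∈ Finset.range l.length,
        if l.getD j 0 = 0 then 0 else ℒ₂ (lam + sigmaL α β l j + β / 2))
        = BS α β (fun x => ℒ₂ (x + β / 2)) l lam := rfl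
    rw [h1, h2, ← hASBS lam, ← hordAS lam]
    ring
  calc (∏ j ∈ Finset.range l.length,
        PfunC (if l.getD j 0 = 0 then ℒ₁ else ℒ₂)
          (u + ((sigmaL α β l j : ℝ) : ℂ) +
            (if l.getD j 0 = 0 then (α : ℂ) else (β : ℂ)) / 2))
      = ∏ j ∈ Finset.range l.length, ∏ lam ∈ S, (u - (lam : ℂ)) ^
          (if l.getD j 0 = 0 then ℒ₁ (lam + sigmaL α β l j + α / 2)
            else ℒ₂ (lam + sigmaL α β l j + β / 2)) := Finset.prod_congr rfl hfac
    _ = ∏ lam ∈ S, ∏ j ∈ Finset.range l.length, (u - (lam : ℂ)) ^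
          (if l.getD j 0 = 0 then ℒ₁ (lam + sigmaL α β l j + α / 2)
            else ℒ₂ (lam + sigmaL α β l j + β / 2)) := Finset.prod_comm
    _ = ∏ lam ∈ S, (u - (lam : ℂ)) ^
          (∑ j ∈ Finset.range l.length,
            if l.getD j 0 = 0 then ℒ₁ (lam + sigmaL α β l j + α / 2)
              else ℒ₂ (lam + sigmaL α β l j + β / 2)) :=
        Finset.prod_congr rfl (fun lam _ => Finset.prod_pow_eq_pow_sum _ _ _)
    _ = ∏ lam ∈ S, (u - (lam : ℂ)) ^ (2 * ordL α β ℒ₁ l lam) :=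
        Finset.prod_congr rfl (fun lam _ => by rw [hsum lam])

end
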